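/- Let G be a commutative group, X ⊆ G a nonempty finite subset, Σ ⊆ G a finite subset, and C₁, C₂ natural numbers. If N_u ≤ C₁ for every u ∈ G with u ∉ Σ, and |Σ| ≤ C₂, then |X|^2 ≤ (C₁^2 + C₂) · |X+X|. -/

import Mathlib

open Finset Pointwise

/-- The additive energy `E(X) := #{(a,b,c,d) ∈ X⁴ : a + b = c + d}`. -/
def addEnergy' {G : Type*} [AddCommGroup G] [DecidableEq G] (X : Finset G) : ℕ :=
  (((X ×ˢ X) ×ˢ X ×ˢ X).filter fun p => p.1.1 + p.1.2 = p.2.1 + p.2.2).card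

/-- The representation count `N_u := #{(a,b) ∈ X² : a + b = u}`. -/
def repCount {G : Type*} [AddCommGroup G] [DecidableEq G] (X : Finset G) (u : G) : ℕ :=
  ((X ×ˢ X).filter fun p => p.1 + p.2 = u).card

private lemma repCount_le_card {G : Type*} [AddCommGroup G] [DecidableEq G]
    (X : Finset G) (u : G) : repCount X u ≤ X.card := by
  unfold repCount
  apply Finset.card_le_card_of_injOn (fun p => p.1)
  · intro p hp
    simp only [Finset.mem_coe, Finset.mem_filter, Finset.mem_product] at hp
    exact hp.1.1
  · intro p hp q hq hpq
    simp only [Finset.coe_filter, Finset.mem_product, Set.mem_setOf_eq] at hp hq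
    have h1 : p.1 = q.1 := hpq
    have h2 : p.2 = q.2 := by
      have := hp.2.trans hq.2.symm
      rw [h1] at this
      exact add_left_cancel this
    exact Prod.ext h1 h2

theorem sq_card_le_mul_card_sumset
    {G : Type*} [AddCommGroup G] [DecidableEq G]
    (X : Finset G) (hX : X.Nonempty) (Sig : Finset G) (C₁ C₂ : ℕ)
    (h : ∀ u : G, u ∉ Sig → repCount X u ≤ C₁) (hSig : Sig.card ≤ C₂) :
    X.card ^ 2 ≤ (C₁ ^ 2 + C₂) * (X + X).card := by
  have key : X.card ^ 2 = ∑ u ∈ X + X, repCount X u := by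
    rw [sq, ← Finset.card_product]
    apply Finset.card_eq_sum_card_fiberwise
    intro p hp
    rw [Finset.mem_coe, Finset.mem_product] at hp
    exact Finset.add_mem_add hp.1 hp.2
  have split := Finset.sum_filter_add_sum_filter_not (X + X) (· ∈ Sig) (repCount X)
  have h1 : ∑ u ∈ (X + X).filter (· ∈ Sig), repCount X u ≤ C₂ * X.card := by
    calc ∑ u ∈ (X + X).filter (· ∈ Sig), repCount X u
        ≤ ∑ _u ∈ (X + X).filter (· ∈ Sig), X.card :=
          Finset.sum_le_sum fun u _ => repCount_le_card X u
      _ = ((X + X).filter (· ∈ Sig)).card * X.card := by rw [Finset.sum_const, smul_eq_mul]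
      _ ≤ C₂ * X.card := by
          apply Nat.mul_le_mul_right
          refine le_trans (Finset.card_le_card ?_) hSig
          intro x hx
          exact (Finset.mem_filter.mp hx).2
  have h2 : ∑ u ∈ (X + X).filter (· ∉ Sig), repCount X u ≤ C₁ * (X + X).card := by
    calc ∑ u ∈ (X + X).filter (· ∉ Sig), repCount X u
        ≤ ∑ _u ∈ (X + X).filter (· ∉ Sig), C₁ := by
          apply Finset.sum_le_sum
          intro u hu
          exact h u (Finset.mem_filter.mp hu).2
      _ = ((X + X).filter (· ∉ Sig)).card * C₁ := by rw [Finset.sum_const, smul_eq_mul]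
      _ ≤ C₁ * (X + X).card := by
          rw [mul_comm]
          exact Nat.mul_le_mul_left _ (Finset.card_filter_le _ _)
  have hXle : X.card ≤ (X + X).card := Finset.card_le_card_add_left (s := X) hX
  have hC1 : C₁ ≤ C₁ ^ 2 := Nat.le_self_pow two_ne_zero C₁
  calc X.card ^ 2 = ∑ u ∈ (X + X).filter (· ∈ Sig), repCount X u
        + ∑ u ∈ (X + X).filter (· ∉ Sig), repCount X u := by rw [key, split]
    _ ≤ C₂ * X.card + C₁ * (X + X).card := Nat.add_le_add h1 h2
    _ ≤ C₂ * (X + X).card + C₁ ^ 2 * (X + X).card :=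
        Nat.add_le_add (Nat.mul_le_mul_left _ hXle) (Nat.mul_le_mul_right _ hC1)
    _ = (C₁ ^ 2 + C₂) * (X + X).card := by ring
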